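/- arXiv:2209.06497 — 2 statements merged into one kernel-verified Lean document; each statement's English description precedes it below -/
import Mathlib

section
/- A torsion-free cotorsion abelian group is algebraically compact. -/
universe u

/-- Old Mathlib definition (removed since): no nontrivial element has finite order. -/
def AddMonoid.IsTorsionFree (G : Type*) [AddMonoid G] : Prop :=
  ∀ g : G, g ≠ 0 → ¬IsOfFinAddOrder g

/-- An abelian group `A` is cotorsion: every extension of `A` by a torsion-free
abelian group splits. -/
def IsCotorsion (A : Type u) [AddCommGroup A] : Prop :=
  ∀ (B : Type u) [AddCommGroup B] (i : A →+ B), Function.Injective i →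
    AddMonoid.IsTorsionFree (B ⧸ i.range) →
    ∃ r : B →+ A, r.comp i = AddMonoidHom.id A

/-- A subgroup `A ≤ B` is pure if every element of `A` divisible by `n` in `B`
is divisible by `n` inside `A`. -/
def IsPureIn {B : Type u} [AddCommGroup B] (A : AddSubgroup B) : Prop :=
  ∀ (n : ℤ) (a : B), a ∈ A → (∃ b : B, n • b = a) → ∃ a' ∈ A, n • a' = a

/-- `A` is algebraically compact if it is a direct summand of every abelian group
containing it as a pure subgroup. -/
def IsAlgebraicallyCompact (A : Type u) [AddCommGroup A] : Prop :=
  ∀ (B : Type u) [AddCommGroup B] (i : A →+ B), Function.Injective i →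
    IsPureIn i.range →
    ∃ r : B →+ A, r.comp i = AddMonoidHom.id A

/-- A torsion-free cotorsion abelian group is algebraically compact. -/
theorem algebraicallyCompact_of_torsionFree_cotorsion (A : Type) [AddCommGroup A]
    (htf : AddMonoid.IsTorsionFree A) (hct : IsCotorsion A) :
    IsAlgebraicallyCompact A := by
  intro B _ i hi hpure
  set T : AddSubgroup B := AddCommGroup.torsion B with hT
  set π : B →+ B ⧸ T := QuotientAddGroup.mk' T with hπ
  set j : A →+ B ⧸ T := π.comp i with hj
  have hjinj : Function.Injective j := by
    rw [injective_iff_map_eq_zero]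
    intro a ha
    have hmem : i a ∈ T := by
      rwa [hj, AddMonoidHom.comp_apply, hπ, QuotientAddGroup.mk'_apply,
        QuotientAddGroup.eq_zero_iff] at ha
    have hfin : IsOfFinAddOrder (i a) := hmem
    obtain ⟨n, hn, hna⟩ := (isOfFinAddOrder_iff_nsmul_eq_zero).mp hfin
    have : i (n • a) = i 0 := by simp [map_nsmul, hna]
    have hna' : n • a = 0 := hi this
    by_contra h0
    exact htf a h0 ((isOfFinAddOrder_iff_nsmul_eq_zero).mpr ⟨n, hn, hna'⟩)
  have hquot : AddMonoid.IsTorsionFree ((B ⧸ T) ⧸ j.range) := by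
    intro x hx hord
    apply hx
    obtain ⟨y, rfl⟩ := QuotientAddGroup.mk_surjective x
    obtain ⟨b, rfl⟩ := QuotientAddGroup.mk_surjective y
    obtain ⟨n, hn, hnx⟩ := (isOfFinAddOrder_iff_nsmul_eq_zero).mp hord
    have h1 : ((n • ((b : B ⧸ T)) : B ⧸ T) : (B ⧸ T) ⧸ j.range) = 0 := by
      rw [← hnx]; rfl
    rw [QuotientAddGroup.eq_zero_iff] at h1
    obtain ⟨a, ha⟩ := h1
    -- ha : j a = n • (b : B ⧸ T)
    have h2 : ((n • b - i a : B) : B ⧸ T) = 0 := by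
      have : ((i a : B) : B ⧸ T) = ((n • b : B) : B ⧸ T) := by
        simpa [hj, hπ] using ha
      simp [QuotientAddGroup.mk_sub, this]
    rw [QuotientAddGroup.eq_zero_iff] at h2
    have hfin2 : IsOfFinAddOrder (n • b - i a) := h2
    obtain ⟨m, hm, hmn⟩ := (isOfFinAddOrder_iff_nsmul_eq_zero).mp hfin2
    have h3 : (m * n) • b = i (m • a) := by
      rw [smul_sub, sub_eq_zero] at hmn
      rw [mul_smul, hmn, map_nsmul]
    obtain ⟨a', ha'mem, ha'⟩ := hpure ((m * n : ℕ) : ℤ) (i (m • a)) ⟨m • a, rfl⟩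
      ⟨b, by rw [natCast_zsmul, h3]⟩
    obtain ⟨a₀, rfl⟩ := ha'mem
    have h4 : (m * n) • (b - i a₀) = 0 := by
      rw [natCast_zsmul, ← h3] at ha'
      rw [smul_sub, ha', sub_self]
    have h5 : b - i a₀ ∈ T :=
      (isOfFinAddOrder_iff_nsmul_eq_zero).mpr ⟨m * n, Nat.mul_pos hm hn, h4⟩
    have h6 : ((b : B ⧸ T)) = j a₀ := by
      rw [hj, AddMonoidHom.comp_apply, hπ, QuotientAddGroup.mk'_apply]
      rw [← sub_eq_zero, ← QuotientAddGroup.mk_sub, QuotientAddGroup.eq_zero_iff]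
      exact h5
    rw [QuotientAddGroup.eq_zero_iff, h6]
    exact ⟨a₀, rfl⟩
  obtain ⟨r, hr⟩ := hct (B ⧸ T) j hjinj hquot
  refine ⟨r.comp π, ?_⟩
  rw [AddMonoidHom.comp_assoc, ← hj, hr]
end

section
/- The quotient group (∏_{ℵ₀} ℤ)/(⊕_{ℵ₀} ℤ) is divisible by every nonzero integer on its torsion-free part; in particular, it is a cotorsion abelian group. -/
universe u

/-- The subgroup `⊕_{ℵ₀} ℤ` of finitely supported sequences inside `∏_{ℵ₀} ℤ`. -/
def finSuppSubgroup : AddSubgroup (ℕ → ℤ) where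
  carrier := {f | (Function.support f).Finite}
  zero_mem' := by simp
  add_mem' := fun hf hg => (hf.union hg).subset (Function.support_add _ _)
  neg_mem' := fun hf => by simpa [Function.support_neg] using hf

lemma solve_system (k : ℕ → ℤ) (w : ℕ → (ℕ → ℤ) ⧸ finSuppSubgroup) :
    ∃ v : ℕ → (ℕ → ℤ) ⧸ finSuppSubgroup, ∀ n, v n = k n • v (n + 1) + w n := by
  classical
  choose wh hwh using fun n => QuotientAddGroup.mk_surjective (w n)
  set K : ℕ → ℕ → ℤ := fun n m => ∏ l ∈ Finset.Ico n m, k l with hK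
  refine ⟨fun n => QuotientAddGroup.mk (fun j => ∑ m ∈ Finset.Icc n j, K n m * wh m j), ?_⟩
  intro n
  rw [← hwh n, ← QuotientAddGroup.mk_zsmul, ← QuotientAddGroup.mk_add, QuotientAddGroup.eq]
  have hsupp : ∀ j, n ≤ j →
      (-(fun j => ∑ m ∈ Finset.Icc n j, K n m * wh m j) + (k n • (fun j => ∑ m ∈ Finset.Icc (n+1) j, K (n+1) m * wh m j) + wh n)) j = 0 := by
    intro j hj
    simp only [Pi.add_apply, Pi.neg_apply, Pi.smul_apply, smul_eq_mul]
    have hsplit : ∑ m ∈ Finset.Icc n j, K n m * wh m j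
        = K n n * wh n j + ∑ m ∈ Finset.Icc (n+1) j, K n m * wh m j := by
      rw [← Finset.Ioc_insert_left hj, Finset.sum_insert (by simp), Finset.Icc_add_one_left_eq_Ioc]
    have hKnn : K n n = 1 := by simp [hK]
    have hstep : ∀ m ∈ Finset.Icc (n+1) j, K n m * wh m j = k n * (K (n+1) m * wh m j) := by
      intro m hm
      have hnm : n < m := by
        have := (Finset.mem_Icc.mp hm).1; omega
      have : K n m = k n * K (n+1) m := by
        simpa [hK] using Finset.prod_eq_prod_Ico_succ_bot hnm k
      rw [this]; ring
    rw [hsplit, Finset.sum_congr rfl hstep, ← Finset.mul_sum, hKnn]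
    ring
  show _ ∈ finSuppSubgroup
  have : Function.support (-(fun j => ∑ m ∈ Finset.Icc n j, K n m * wh m j) + (k n • (fun j => ∑ m ∈ Finset.Icc (n+1) j, K (n+1) m * wh m j) + wh n)) ⊆ ↑(Finset.range n) := by
    intro j hjs
    simp only [Finset.coe_range, Set.mem_Iio]
    by_contra h
    exact hjs (hsupp j (by omega))
  exact Set.Finite.subset (Finset.range n).finite_toSet this

theorem isCotorsion_of_solvable (A : Type u) [AddCommGroup A]
    (hsolve : ∀ (k : ℕ → ℤ) (w : ℕ → A), ∃ v : ℕ → A, ∀ n, v n = k n • v (n + 1) + w n) :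
    IsCotorsion A := by
  classical
  intro B _ i hinj htf
  set Good : AddSubgroup (B × A) → Prop := fun G =>
    (∀ a : A, (i a, a) ∈ G) ∧
    (∀ (x : B) (a a' : A), (x, a) ∈ G → (x, a') ∈ G → a = a') ∧
    (∀ (n : ℤ) (x : B), n ≠ 0 → (∃ a, (n • x, a) ∈ G) → ∃ a, (x, a) ∈ G) with hGoodDef
  have hG0 : Good ((i.prod (AddMonoidHom.id A)).range) := by
    refine ⟨fun a => ⟨a, rfl⟩, ?_, ?_⟩
    · rintro x a a' ⟨a0, h0⟩ ⟨a1, h1⟩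
      simp only [AddMonoidHom.prod_apply, AddMonoidHom.id_apply, Prod.mk.injEq] at h0 h1
      obtain ⟨h0a, rfl⟩ := h0; obtain ⟨h1a, rfl⟩ := h1
      exact hinj (h0a.trans h1a.symm)
    · rintro n x hn ⟨a, ⟨a0, h0⟩⟩
      simp only [AddMonoidHom.prod_apply, AddMonoidHom.id_apply, Prod.mk.injEq] at h0
      have hx0 : ((n • x : B) : B ⧸ i.range) = 0 :=
        (QuotientAddGroup.eq_zero_iff _).2 ⟨a0, h0.1⟩
      have hxq : (n : ℤ) • ((x : B) : B ⧸ i.range) = 0 := by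
        rw [← QuotientAddGroup.mk_zsmul]; exact hx0
      have : ((x : B) : B ⧸ i.range) = 0 := by
        by_contra hne
        exact htf _ hne (isOfFinAddOrder_iff_zsmul_eq_zero.2 ⟨n, hn, hxq⟩)
      obtain ⟨a', ha'⟩ := (QuotientAddGroup.eq_zero_iff _).1 this
      exact ⟨a', ⟨a', by simp [ha']⟩⟩
  have hub : ∀ c ⊆ {G | Good G}, IsChain (· ≤ ·) c → ∀ y ∈ c,
      ∃ ub ∈ {G | Good G}, ∀ z ∈ c, z ≤ ub := by
    intro c hcs hchain y hy
    haveI : Nonempty c := ⟨⟨y, hy⟩⟩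
    have hdir : Directed (· ≤ ·) (fun H : c => (H : AddSubgroup (B × A))) := by
      intro H1 H2
      rcases hchain.total H1.2 H2.2 with h | h
      · exact ⟨H2, h, le_rfl⟩
      · exact ⟨H1, le_rfl, h⟩
    refine ⟨⨆ H : c, (H : AddSubgroup (B × A)), ⟨?_, ?_, ?_⟩,
      fun z hz => le_iSup_of_le ⟨z, hz⟩ le_rfl⟩
    · intro a
      exact (AddSubgroup.mem_iSup_of_directed hdir).2 ⟨⟨y, hy⟩, (hcs hy).1 a⟩
    · intro x a a' ha ha'
      obtain ⟨H1, h1⟩ := (AddSubgroup.mem_iSup_of_directed hdir).1 ha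
      obtain ⟨H2, h2⟩ := (AddSubgroup.mem_iSup_of_directed hdir).1 ha'
      obtain ⟨H3, l1, l2⟩ := hdir H1 H2
      exact (hcs H3.2).2.1 x a a' (l1 h1) (l2 h2)
    · rintro n x hn ⟨a, ha⟩
      obtain ⟨H1, h1⟩ := (AddSubgroup.mem_iSup_of_directed hdir).1 ha
      obtain ⟨a', ha'⟩ := (hcs H1.2).2.2 n x hn ⟨a, h1⟩
      exact ⟨a', (AddSubgroup.mem_iSup_of_directed hdir).2 ⟨H1, ha'⟩⟩
  obtain ⟨G, -, hGmax⟩ := zorn_le_nonempty₀ {G | Good G} hub _ hG0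
  obtain ⟨hGi, hGfun, hGsat⟩ := hGmax.1
  set Dom : B → Prop := fun x => ∃ a, (x, a) ∈ G with hDomDef
  set f : B → A := fun x => if h : Dom x then h.choose else 0 with hfdef
  have hfG : ∀ x, Dom x → (x, f x) ∈ G := by
    intro x hx
    have : f x = hx.choose := dif_pos hx
    rw [this]; exact hx.choose_spec
  have hfuniq : ∀ x a, (x, a) ∈ G → f x = a := by
    intro x a ha
    exact hGfun x (f x) a (hfG x ⟨a, ha⟩) ha
  have hDom0 : Dom 0 := ⟨0, G.zero_mem⟩
  have hDomadd : ∀ {x y}, Dom x → Dom y → Dom (x + y) := by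
    rintro x y ⟨a, ha⟩ ⟨a', ha'⟩
    exact ⟨a + a', by simpa using G.add_mem ha ha'⟩
  have hDomneg : ∀ {x}, Dom x → Dom (-x) := by
    rintro x ⟨a, ha⟩; exact ⟨-a, by simpa using G.neg_mem ha⟩
  have hDomsub : ∀ {x y}, Dom x → Dom y → Dom (x - y) := by
    intro x y hx hy
    rw [sub_eq_add_neg]; exact hDomadd hx (hDomneg hy)
  have hDomsmul : ∀ (n : ℤ) {x}, Dom x → Dom (n • x) := by
    rintro n x ⟨a, ha⟩
    exact ⟨n • a, by simpa [Prod.smul_mk] using zsmul_mem ha n⟩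
  have hfadd : ∀ {x y}, Dom x → Dom y → f (x + y) = f x + f y := by
    intro x y hx hy
    exact hfuniq _ _ (by simpa using G.add_mem (hfG x hx) (hfG y hy))
  have hfneg : ∀ {x}, Dom x → f (-x) = - f x := by
    intro x hx
    exact hfuniq _ _ (by simpa using G.neg_mem (hfG x hx))
  have hfsmul : ∀ (n : ℤ) {x}, Dom x → f (n • x) = n • f x := by
    intro n x hx
    exact hfuniq _ _ (by simpa [Prod.smul_mk] using zsmul_mem (hfG x hx) n)
  have hDomAll : ∀ x : B, Dom x := by
    by_contra hex
    push_neg at hex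
    obtain ⟨b, hbS⟩ := hex
    -- `T d` : `b` is divisible by `d` modulo the domain of `G`
    set T : ℤ → Prop := fun d => ∃ e : B, Dom (d • e - b) with hTdef
    have hT1 : T 1 := ⟨b, by simpa using hDom0⟩
    have hTdvd : ∀ c d : ℤ, c ∣ d → T d → T c := by
      rintro c d ⟨m, rfl⟩ ⟨e, he⟩
      exact ⟨m • e, by rwa [smul_smul]⟩
    have hTlcm : ∀ d d' : ℤ, d ≠ 0 → d' ≠ 0 → T d → T d' → T (Int.lcm d d' : ℤ) := by
      rintro d d' hd hd' ⟨e, he⟩ ⟨e', he'⟩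
      have hgpos : 0 < Int.gcd d d' := Int.gcd_pos_of_ne_zero_left d' hd
      set g : ℤ := (Int.gcd d d' : ℤ) with hgdef
      set dd : ℤ := d / g with hdddef
      set dd' : ℤ := d' / g with hdd'def
      have hdg : d = g * dd := (Int.mul_ediv_cancel' (Int.gcd_dvd_left _ _)).symm
      have hd'g : d' = g * dd' := (Int.mul_ediv_cancel' (Int.gcd_dvd_right _ _)).symm
      have hcop : Int.gcd dd dd' = 1 := Int.gcd_div_gcd_div_gcd hgpos
      obtain ⟨u, vv, hbez⟩ : ∃ u vv : ℤ, dd * u + dd' * vv = 1 := by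
        refine ⟨Int.gcdA dd dd', Int.gcdB dd dd', ?_⟩
        have h := Int.gcd_eq_gcd_ab dd dd'
        rw [hcop] at h
        exact_mod_cast h.symm
      apply hTdvd _ (g * dd * dd')
      · apply Int.dvd_natAbs.mp (Int.natCast_dvd_natCast.mpr (Int.lcm_dvd (Int.dvd_natAbs.mpr ?_) (Int.dvd_natAbs.mpr ?_)))
        · rw [hdg]; exact ⟨dd', by ring⟩
        · rw [hd'g]; exact ⟨dd, by ring⟩
      · refine ⟨vv • e + u • e', ?_⟩
        have key : (g * dd * dd') • (vv • e + u • e') - b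
            = vv • (dd' • (d • e - b)) + u • (dd • (d' • e' - b)) + ((dd' * vv + dd * u) - 1) • b := by
          rw [hdg, hd'g]; module
        rw [key, show (dd' * vv + dd * u) - 1 = 0 by omega, zero_smul, add_zero]
        exact hDomadd (hDomsmul vv (hDomsmul dd' he)) (hDomsmul u (hDomsmul dd he'))
    -- the chain of denominators
    set ζ : ℕ → ℤ := fun n => Denumerable.ofNat ℤ n with hζdef
    have hζ : ∀ d : ℤ, ∃ n : ℕ, ζ n = d :=
      fun d => ⟨Encodable.encode d, Denumerable.ofNat_encode d⟩
    set D : ℕ → ℤ := fun n => Nat.rec 1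
      (fun k Dk => if T (ζ k) ∧ ζ k ≠ 0 then (Int.lcm Dk (ζ k) : ℤ) else Dk) n with hDdef
    have hDsucc : ∀ k, D (k + 1) = if T (ζ k) ∧ ζ k ≠ 0 then (Int.lcm (D k) (ζ k) : ℤ) else D k :=
      fun k => rfl
    have hD0 : D 0 = 1 := rfl
    have hDgood : ∀ k, T (D k) ∧ D k ≠ 0 := by
      intro k
      induction k with
      | zero => exact ⟨hT1, one_ne_zero⟩
      | succ k ih =>
        rw [hDsucc]
        split_ifs with h
        · refine ⟨hTlcm _ _ ih.2 h.2 ih.1 h.1, ?_⟩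
          intro h0
          have hnat : Int.lcm (D k) (ζ k) = 0 := by exact_mod_cast h0
          have hml := Int.gcd_mul_lcm (D k) (ζ k)
          rw [hnat, Nat.mul_zero] at hml
          have : D k * ζ k = 0 := Int.natAbs_eq_zero.1 (by rw [Int.natAbs_mul]; exact hml.symm)
          rcases mul_eq_zero.1 this with h1 | h1
          · exact ih.2 h1
          · exact h.2 h1
        · exact ih
    have hDdvd : ∀ k, D k ∣ D (k + 1) := by
      intro k; rw [hDsucc]; split_ifs with h
      · exact Int.dvd_lcm_left _ _
      · exact dvd_rfl
    have hDcof : ∀ d : ℤ, T d → d ≠ 0 → ∃ k, d ∣ D k := by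
      intro d hTd hd0
      obtain ⟨n, hn⟩ := hζ d
      refine ⟨n + 1, ?_⟩
      rw [hDsucc, hn, if_pos ⟨hTd, hd0⟩]
      exact Int.dvd_lcm_right _ _
    -- the elements `e k` with `D k • e k ≡ b` mod the domain
    choose e he using fun k => (hDgood k).1
    have hcex : ∀ k, ∃ ck : ℤ, D (k + 1) = D k * ck := fun k => hDdvd k
    choose c hc using hcex
    set q : ℕ → B := fun k => e k - c k • e (k + 1) with hqdef
    have hq : ∀ k, Dom (q k) := by
      intro k
      apply hGsat (D k) _ (hDgood k).2
      show Dom (D k • q k)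
      have key : D k • q k = (D k • e k - b) - (D (k + 1) • e (k + 1) - b) := by
        rw [hqdef]; simp only []; rw [hc k]; module
      rw [key]
      exact hDomsub (he k) (he (k + 1))
    -- solve the system of equations in A
    obtain ⟨v, hv⟩ := hsolve c (fun k => f (q k))
    -- bumping representations one level up
    have hbump : ∀ (x : B) (k : ℕ) (m : ℤ), Dom (x - m • e k) →
        Dom (x - (m * c k) • e (k + 1)) ∧
          f (x - (m * c k) • e (k + 1)) + (m * c k) • v (k + 1) = f (x - m • e k) + m • v k := by
      intro x k m h
      have key : x - (m * c k) • e (k + 1) = (x - m • e k) + m • q k := by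
        rw [hqdef]; simp only []; module
      constructor
      · rw [key]; exact hDomadd h (hDomsmul m (hq k))
      · rw [key, hfadd h (hDomsmul m (hq k)), hfsmul m (hq k), hv k, mul_smul]
        rw [smul_add]
        abel
    have hup : ∀ (x : B) (k : ℕ) (m : ℤ), Dom (x - m • e k) → ∀ j, ∃ m' : ℤ,
        Dom (x - m' • e (k + j)) ∧
          f (x - m' • e (k + j)) + m' • v (k + j) = f (x - m • e k) + m • v k := by
      intro x k m h j
      induction j with
      | zero => exact ⟨m, h, rfl⟩
      | succ j ih =>
        obtain ⟨m', h1, h2⟩ := ih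
        obtain ⟨h3, h4⟩ := hbump x (k + j) m' h1
        rw [show k + (j + 1) = k + j + 1 by omega]
        exact ⟨m' * c (k + j), h3, by rw [h4, h2]⟩
    have huniq : ∀ (x : B) (k : ℕ) (m m' : ℤ), Dom (x - m • e k) → Dom (x - m' • e k) →
        m = m' := by
      intro x k m m' h h'
      by_contra hne
      have hdiff : Dom ((m - m') • e k) := by
        have hid : (m - m') • e k = (x - m' • e k) - (x - m • e k) := by module
        rw [hid]; exact hDomsub h' h
      have hek : Dom (e k) := hGsat (m - m') (e k) (sub_ne_zero.2 hne) hdiff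
      apply hbS
      have hid2 : b = D k • e k - (D k • e k - b) := by module
      rw [hid2]
      exact hDomsub (hDomsmul (D k) hek) (he k)
    have hindep : ∀ (x : B) (k : ℕ) (m : ℤ) (k' : ℕ) (m' : ℤ),
        Dom (x - m • e k) → Dom (x - m' • e k') →
          f (x - m • e k) + m • v k = f (x - m' • e k') + m' • v k' := by
      intro x k m k' m' h h'
      obtain ⟨m₂, h1, h2⟩ := hup x k m h (max k k' - k)
      obtain ⟨m₂', h1', h2'⟩ := hup x k' m' h' (max k k' - k')
      rw [show k + (max k k' - k) = max k k' from by omega] at h1 h2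
      rw [show k' + (max k k' - k') = max k k' from by omega] at h1' h2'
      rw [← h2, ← h2', huniq x (max k k') m₂ m₂' h1 h1']
    -- the extended partial map
    set f' : B → A := fun x => if h : ∃ p : ℕ × ℤ, Dom (x - p.2 • e p.1) then
        f (x - h.choose.2 • e h.choose.1) + h.choose.2 • v h.choose.1 else 0 with hf'def
    have hf'eq : ∀ (x : B) (k : ℕ) (m : ℤ), Dom (x - m • e k) →
        f' x = f (x - m • e k) + m • v k := by
      intro x k m h
      have hex : ∃ p : ℕ × ℤ, Dom (x - p.2 • e p.1) := ⟨(k, m), h⟩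
      rw [hf'def]
      simp only [dif_pos hex]
      exact hindep x hex.choose.1 hex.choose.2 k m hex.choose_spec h
    -- any element with a divisibility witness has a representation
    have hrep : ∀ (x : B) (d n : ℤ), d ≠ 0 → Dom (d • x - n • b) →
        ∃ (k : ℕ) (m : ℤ), Dom (x - m • e k) := by
      intro x d n hd hdom
      have hgpos : 0 < Int.gcd n d := Int.gcd_pos_of_ne_zero_right n hd
      set g : ℤ := (Int.gcd n d : ℤ) with hgdef
      set ν : ℤ := n / g with hνdef
      set dd : ℤ := d / g with hdddef
      have hng : n = g * ν := (Int.mul_ediv_cancel' (Int.gcd_dvd_left _ _)).symm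
      have hdg : d = g * dd := (Int.mul_ediv_cancel' (Int.gcd_dvd_right _ _)).symm
      have hg0 : g ≠ 0 := by
        simp only [hgdef]
        exact_mod_cast hgpos.ne'
      have hdd0 : dd ≠ 0 := by
        intro h0
        rw [h0, mul_zero] at hdg
        exact hd hdg
      have hstep : Dom (dd • x - ν • b) := by
        apply hGsat g _ hg0
        show Dom (g • (dd • x - ν • b))
        have hid : g • (dd • x - ν • b) = d • x - n • b := by rw [hng, hdg]; module
        rw [hid]; exact hdom
      have hcop : Int.gcd ν dd = 1 := Int.gcd_div_gcd_div_gcd hgpos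
      obtain ⟨u, w', hbez⟩ : ∃ u w' : ℤ, ν * u + dd * w' = 1 := by
        refine ⟨Int.gcdA ν dd, Int.gcdB ν dd, ?_⟩
        have h := Int.gcd_eq_gcd_ab ν dd
        rw [hcop] at h
        exact_mod_cast h.symm
      have hTdd : T dd := by
        refine ⟨u • x + w' • b, ?_⟩
        have hid : dd • (u • x + w' • b) - b
            = u • (dd • x - ν • b) + (dd * w' + ν * u - 1) • b := by module
        rw [hid, show dd * w' + ν * u - 1 = 0 by omega, zero_smul, add_zero]
        exact hDomsmul u hstep
      obtain ⟨k, hk⟩ := hDcof dd hTdd hdd0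
      obtain ⟨μ, hμ⟩ := hk
      refine ⟨k, μ * ν, ?_⟩
      apply hGsat dd _ hdd0
      show Dom (dd • (x - (μ * ν) • e k))
      have hid : dd • (x - (μ * ν) • e k)
          = (dd • x - ν • b) - ν • (D k • e k - b) + (ν * D k - dd * (μ * ν)) • e k := by
        module
      have hz : ν * D k - dd * (μ * ν) = 0 := by rw [hμ]; ring
      rw [hid, hz, zero_smul, add_zero]
      exact hDomsub hstep (hDomsmul ν (he k))
    have hf0 : f 0 = 0 := hfuniq 0 0 G.zero_mem
    -- the strictly bigger good subgroup
    set G' : AddSubgroup (B × A) :=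
      { carrier := {p : B × A | (∃ (k : ℕ) (m : ℤ), Dom (p.1 - m • e k)) ∧ p.2 = f' p.1}
        zero_mem' := by
          refine ⟨⟨0, 0, by simpa using hDom0⟩, ?_⟩
          show (0 : A) = f' (0 : B)
          rw [hf'eq 0 0 0 (by simpa using hDom0)]
          simp [hf0]
        add_mem' := by
          rintro p p' ⟨⟨k, m, hk⟩, hp2⟩ ⟨⟨k', m', hk'⟩, hp2'⟩
          obtain ⟨m₂, h1, h2⟩ := hup p.1 k m hk (max k k' - k)
          obtain ⟨m₂', h1', h2'⟩ := hup p'.1 k' m' hk' (max k k' - k')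
          rw [show k + (max k k' - k) = max k k' from by omega] at h1 h2
          rw [show k' + (max k k' - k') = max k k' from by omega] at h1' h2'
          have hid : p.1 + p'.1 - (m₂ + m₂') • e (max k k')
              = (p.1 - m₂ • e (max k k')) + (p'.1 - m₂' • e (max k k')) := by module
          have hsum : Dom (p.1 + p'.1 - (m₂ + m₂') • e (max k k')) := by
            rw [hid]; exact hDomadd h1 h1'
          refine ⟨⟨max k k', m₂ + m₂', hsum⟩, ?_⟩
          show p.2 + p'.2 = f' (p.1 + p'.1)
          rw [hf'eq _ _ _ hsum, hid, hfadd h1 h1', hp2, hp2',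
            hf'eq p.1 _ _ hk, hf'eq p'.1 _ _ hk', ← h2, ← h2', add_smul]
          abel
        neg_mem' := by
          rintro p ⟨⟨k, m, hk⟩, hp2⟩
          have hid : -p.1 - (-m) • e k = -(p.1 - m • e k) := by module
          have hneg : Dom (-p.1 - (-m) • e k) := by rw [hid]; exact hDomneg hk
          refine ⟨⟨k, -m, hneg⟩, ?_⟩
          show -p.2 = f' (-p.1)
          rw [hf'eq _ _ _ hneg, hid, hfneg hk, hp2, hf'eq p.1 _ _ hk, neg_smul]
          abel } with hG'def
    have hGsub : G ≤ G' := by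
      intro p hp
      have hdom : Dom p.1 := ⟨p.2, by simpa using hp⟩
      have h00 : Dom (p.1 - (0 : ℤ) • e 0) := by simpa using hdom
      refine ⟨⟨0, 0, h00⟩, ?_⟩
      show p.2 = f' p.1
      rw [hf'eq p.1 0 0 h00]
      simp only [zero_smul, sub_zero, add_zero]
      exact (hfuniq p.1 p.2 (by simpa using hp)).symm
    have hG'good : Good G' := by
      refine ⟨fun a0 => hGsub (hGi a0), ?_, ?_⟩
      · rintro x a1 a2 ⟨-, h1⟩ ⟨-, h2⟩
        exact h1.trans h2.symm
      · rintro n x hn ⟨a1, ⟨⟨k, m, hk⟩, -⟩⟩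
        have hw : Dom ((D k * n) • x - m • b) := by
          have hid : (D k * n) • x - m • b
              = D k • ((n • x : B) - m • e k) + m • (D k • e k - b) := by module
          rw [hid]
          exact hDomadd (hDomsmul _ hk) (hDomsmul _ (he k))
        obtain ⟨k', m', hk'⟩ := hrep x (D k * n) m (mul_ne_zero (hDgood k).2 hn) hw
        exact ⟨f' x, ⟨⟨k', m', hk'⟩, rfl⟩⟩
    have hbG' : ((b, f' b) : B × A) ∈ G' := by
      refine ⟨⟨0, 1, ?_⟩, rfl⟩
      show Dom (b - (1 : ℤ) • e 0)
      have hid : b - (1 : ℤ) • e 0 = -(D 0 • e 0 - b) := by rw [hD0]; module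
      rw [hid]
      exact hDomneg (he 0)
    have hle : G' ≤ G := hGmax.2 hG'good hGsub
    exact hbS ⟨f' b, hle hbG'⟩
  refine ⟨AddMonoidHom.mk' f (fun x y => hfadd (hDomAll x) (hDomAll y)), ?_⟩
  ext a
  exact hfuniq (i a) a (hGi a)

/-- The quotient group `(∏_{ℵ₀} ℤ)/(⊕_{ℵ₀} ℤ)` is a cotorsion abelian group. -/
theorem quotient_prod_by_sum_cotorsion :
    IsCotorsion ((ℕ → ℤ) ⧸ finSuppSubgroup) :=
  isCotorsion_of_solvable _ solve_system
end
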